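/- Let (P_n ⊆ ℝ^n) be integral polytopes such that the m(n)-th Birkhoff polytope is an extension of P_n along an affine map ℓ_n with integer coefficients, where m(n) is polynomially bounded. Then for each n the polynomial f_n(y) = Σ_{π ∈ S_{m(n)}} y^{ℓ_n(M_π)} (where M_π is the permutation matrix of π) has Newton polytope exactly P_n. -/

import Mathlib

open MvPolynomial

def permMat {n : ℕ} (σ : Equiv.Perm (Fin n)) : Fin n × Fin n → ℝ :=
  fun p => if σ p.1 = p.2 then 1 else 0

/-- The Birkhoff polytope: convex hull of the `m × m` permutation matrices. -/
noncomputable def birkhoff (m : ℕ) : Set (Fin m × Fin m → ℝ) :=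
  convexHull ℝ (Set.range (permMat (n := m)))

/-- The Newton polytope of a polynomial: the convex hull of its exponent vectors. -/
noncomputable def newton {σ : Type*} (f : MvPolynomial σ ℝ) : Set (σ → ℝ) :=
  convexHull ℝ ((fun d : σ →₀ ℕ => fun i => (d i : ℝ)) '' (f.support : Set (σ →₀ ℕ)))

/-- Given integral polytopes `P_j ⊆ ℝ^j` such that the `m j`-th Birkhoff polytope is an
extension of `P_j` along an affine map `ℓ j` with integer coefficients (mapping integer
points to integer points), with `m` polynomially bounded, the polynomial
`f_n(y) = ∑_{π ∈ S_{m n}} y^{ℓ_n(M_π)}` has Newton polytope exactly `P_n`. -/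
theorem newton_of_birkhoff_extension (n : ℕ) (m : ℕ → ℕ)
    (hm : ∃ C k : ℕ, ∀ j, m j ≤ C * j ^ k + C)
    (P : (j : ℕ) → Set (Fin j → ℝ))
    (hint : ∀ j, ∃ S : Finset (Fin j → ℝ), P j = convexHull ℝ (S : Set (Fin j → ℝ)) ∧
      ∀ x ∈ S, ∀ i, ∃ z : ℤ, x i = (z : ℝ))
    (ℓ : (j : ℕ) → ((Fin (m j) × Fin (m j)) → ℝ) →ᵃ[ℝ] (Fin j → ℝ))
    (hℓint : ∀ (j : ℕ) (x : (Fin (m j) × Fin (m j)) → ℝ),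
      (∀ p, ∃ z : ℤ, x p = (z : ℝ)) → ∀ i, ∃ z : ℤ, ℓ j x i = (z : ℝ))
    (hext : ∀ j, (ℓ j) '' birkhoff (m j) = P j)
    (hnat : ∀ (j : ℕ) (σ : Equiv.Perm (Fin (m j))) (i : Fin j),
      ∃ k : ℕ, ℓ j (permMat σ) i = (k : ℝ)) :
    newton (∑ σ : Equiv.Perm (Fin (m n)),
        (MvPolynomial.monomial
          (Finsupp.equivFunOnFinite.symm fun i => ⌊ℓ n (permMat σ) i⌋₊) (1 : ℝ)))
      = P n := by
  classical
  set d : Equiv.Perm (Fin (m n)) → ((Fin n →₀ ℕ)) :=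
    fun σ => Finsupp.equivFunOnFinite.symm fun i => ⌊ℓ n (permMat σ) i⌋₊ with hd
  set f : MvPolynomial (Fin n) ℝ :=
    ∑ σ : Equiv.Perm (Fin (m n)), MvPolynomial.monomial (d σ) (1 : ℝ) with hf
  have hcoeff : ∀ e, f.coeff e =
      ((Finset.univ.filter (fun σ : Equiv.Perm (Fin (m n)) => d σ = e)).card : ℝ) := by
    intro e
    rw [hf, MvPolynomial.coeff_sum]
    simp [MvPolynomial.coeff_monomial, Finset.sum_boole]
  have hsupp : (f.support : Set (Fin n →₀ ℕ)) = Set.range d := by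
    ext e
    simp only [Finset.mem_coe, MvPolynomial.mem_support_iff, hcoeff, Set.mem_range]
    constructor
    · intro h
      have : (Finset.univ.filter (fun σ : Equiv.Perm (Fin (m n)) => d σ = e)).Nonempty := by
        rw [Finset.nonempty_iff_ne_empty]
        intro hc
        rw [hc] at h
        simp at h
      obtain ⟨σ, hσ⟩ := this
      exact ⟨σ, (Finset.mem_filter.mp hσ).2⟩
    · rintro ⟨σ, rfl⟩
      have : σ ∈ Finset.univ.filter (fun τ : Equiv.Perm (Fin (m n)) => d τ = d σ) := by
        simp
      have hpos : 0 < (Finset.univ.filter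
          (fun τ : Equiv.Perm (Fin (m n)) => d τ = d σ)).card :=
        Finset.card_pos.mpr ⟨σ, this⟩
      positivity
  have himg : (fun e : Fin n →₀ ℕ => fun i => (e i : ℝ)) '' (f.support : Set (Fin n →₀ ℕ))
      = (ℓ n) '' Set.range (permMat (n := m n)) := by
    rw [hsupp, ← Set.range_comp, ← Set.range_comp]
    have hfun : ((fun e : Fin n →₀ ℕ => fun i => (e i : ℝ)) ∘ d)
        = (⇑(ℓ n) ∘ permMat) := by
      funext σ
      funext i
      have ⟨k, hk⟩ := hnat n σ i
      simp only [Function.comp_apply, hd, Finsupp.coe_equivFunOnFinite_symm, hk,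
        Nat.floor_natCast]
    rw [hfun]
  show newton f = P n
  rw [newton, himg, ← AffineMap.image_convexHull, ← birkhoff, hext]
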